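/- Let Ω⊆R^n be open, g measurable with g², 1/g² ∈ L^∞(Ω), A∈S(N×n) rank-one positive with ellipticity constant ν(A)>0, and G : Ω×(R^N⊗S(n)) → R^N a Carathéodory map, Lipschitz in its second argument, with ess sup_x Lip(G(x,·)/g²(x)) < ν(A). Then the map F(x,X) := g²(x) A:X + G(x,X) satisfies the K-condition with α := g^{-2}, some β∈(0,1) and γ := (1−β)/2. -/

import Mathlib

open Finset MeasureTheory

/-- Tensors in `ℝ^N ⊗ ℝ^{n×n}` (hessian-type arguments). -/
abbrev Tens (N n : ℕ) := Fin N → Fin n → Fin n → ℝ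

/-- The contraction `A:Z ∈ ℝ^N`, `(A:Z)_α = A_{αβij} Z_{βij}`. -/
def contA {N n : ℕ} (A : Fin N → Fin N → Fin n → Fin n → ℝ) (Z : Tens N n) : Fin N → ℝ :=
  fun α => ∑ β, ∑ i, ∑ j, A α β i j * Z β i j

/-- Squared Euclidean norm on `ℝ^N`. -/
def vnorm2 {N : ℕ} (v : Fin N → ℝ) : ℝ := ∑ α, (v α) ^ 2

/-- Squared Frobenius norm on tensors. -/
def tnorm2 {N n : ℕ} (Z : Tens N n) : ℝ := ∑ α, ∑ i, ∑ j, (Z α i j) ^ 2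

/-- Example 1: let `g` be measurable with `g², 1/g² ∈ L^∞(Ω)`, let
`A ∈ S(N×n)` be rank-one positive with ellipticity constant `ν(A) > 0`, and let `G` be a
Carathéodory map, Lipschitz in its second argument with
`ess sup_x Lip(G(x,·)/g²(x)) < ν(A)`. Then `F(x,X) := g²(x) A:X + G(x,X)` satisfies the
K-condition with `α := g⁻²`, some `β ∈ (0,1)` and `γ := (1−β)/2`. -/
theorem stmt8 {n N : ℕ} (Ω : Set (Fin n → ℝ)) (hΩ : IsOpen Ω)
    (g : (Fin n → ℝ) → ℝ) (hgmeas : Measurable g)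
    (hg2 : MemLp (fun x => g x ^ 2) ⊤ (volume.restrict Ω))
    (hg2inv : MemLp (fun x => (g x ^ 2)⁻¹) ⊤ (volume.restrict Ω))
    (hgpos : ∀ᵐ x ∂(volume.restrict Ω), g x ≠ 0)
    (A : Fin N → Fin N → Fin n → Fin n → ℝ)
    (hsymm : ∀ α β i j, A α β i j = A β α j i) (ν : ℝ) (hν : 0 < ν)
    (hrank1 : ∀ (η : Fin N → ℝ) (a : Fin n → ℝ),
      ∑ α, ∑ β, ∑ i, ∑ j, A α β i j * η α * a i * η β * a j ≥
        ν * (∑ α, (η α) ^ 2) * (∑ i, (a i) ^ 2))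
    (G : (Fin n → ℝ) → Tens N n → Fin N → ℝ)
    (hGmeas : ∀ X : Tens N n, Measurable fun x => G x X)
    (hGcont : ∀ᵐ x ∂(volume.restrict Ω), Continuous fun X => G x X)
    (L : ℝ) (hL : L < ν)
    (hGLip : ∀ᵐ x ∂(volume.restrict Ω), ∀ X Y : Tens N n,
      Real.sqrt (vnorm2 (fun γ => G x Y γ - G x X γ)) ≤
        L * g x ^ 2 * Real.sqrt (tnorm2 (Y - X))) :
    ∃ be : ℝ, 0 < be ∧ be < 1 ∧ be + (1 - be) / 2 < 1 ∧
      ∀ᵐ x ∂(volume.restrict Ω), ∀ X Z : Tens N n,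
        vnorm2 (fun γ => contA A Z γ -
            (g x ^ 2)⁻¹ *
              ((g x ^ 2 * contA A (X + Z) γ + G x (X + Z) γ) -
               (g x ^ 2 * contA A X γ + G x X γ))) ≤
          be * ν ^ 2 * tnorm2 Z + ((1 - be) / 2) * vnorm2 (contA A Z) := by

  have hvn : ∀ (M : ℕ) (v : Fin M → ℝ), 0 ≤ vnorm2 v := fun M v =>
    Finset.sum_nonneg fun _ _ => by positivity
  have htn : ∀ (Z : Tens N n), 0 ≤ tnorm2 Z := fun Z =>
    Finset.sum_nonneg fun _ _ => Finset.sum_nonneg fun _ _ =>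
      Finset.sum_nonneg fun _ _ => by positivity
  set L' := max L 0 with hL'def
  have hL'0 : 0 ≤ L' := le_max_right _ _
  have hL'ν : L' < ν := max_lt hL hν
  set be := (L' ^ 2 / ν ^ 2 + 1) / 2 with hbe
  have hνsq : 0 < ν ^ 2 := by positivity
  have hfrac : L' ^ 2 / ν ^ 2 < 1 := by
    rw [div_lt_one hνsq]
    have := pow_lt_pow_left₀ hL'ν hL'0 (by norm_num : 2 ≠ 0)
    linarith
  have hfrac0 : 0 ≤ L' ^ 2 / ν ^ 2 := by positivity
  have hbe1 : be < 1 := by rw [hbe]; linarith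
  have hbe0 : 0 < be := by rw [hbe]; linarith
  have hbeν : L' ^ 2 ≤ be * ν ^ 2 := by
    rw [hbe]
    have : L' ^ 2 / ν ^ 2 * ν ^ 2 = L' ^ 2 := div_mul_cancel₀ _ (ne_of_gt hνsq)
    nlinarith [pow_lt_pow_left₀ hL'ν hL'0 (by norm_num : 2 ≠ 0)]
  refine ⟨be, hbe0, hbe1, by linarith, ?_⟩
  filter_upwards [hgpos, hGLip] with x hg hLip X Z
  have hg2 : g x ^ 2 ≠ 0 := pow_ne_zero 2 hg
  have hg2pos : 0 < g x ^ 2 := (pow_ne_zero 2 hg).lt_of_le' (sq_nonneg _)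
  have hlin : ∀ γ, contA A (X + Z) γ = contA A X γ + contA A Z γ := by
    intro γ
    simp [contA, Pi.add_apply, mul_add, Finset.sum_add_distrib]
  have key : ∀ γ, contA A Z γ -
      (g x ^ 2)⁻¹ * ((g x ^ 2 * contA A (X + Z) γ + G x (X + Z) γ) -
        (g x ^ 2 * contA A X γ + G x X γ)) =
      -((g x ^ 2)⁻¹ * (G x (X + Z) γ - G x X γ)) := by
    intro γ
    rw [hlin γ]
    field_simp
    ring
  have hveq : vnorm2 (fun γ => contA A Z γ -
      (g x ^ 2)⁻¹ * ((g x ^ 2 * contA A (X + Z) γ + G x (X + Z) γ) -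
        (g x ^ 2 * contA A X γ + G x X γ))) =
      ((g x ^ 2)⁻¹) ^ 2 * vnorm2 (fun γ => G x (X + Z) γ - G x X γ) := by
    simp only [vnorm2, key, Finset.mul_sum]
    exact Finset.sum_congr rfl fun γ _ => by ring
  have hZ : X + Z - X = Z := by abel
  have hlip2 := hLip X (X + Z)
  rw [hZ] at hlip2
  have hsq : Real.sqrt (vnorm2 (fun γ => G x (X + Z) γ - G x X γ)) ≤
      L' * g x ^ 2 * Real.sqrt (tnorm2 Z) := by
    refine hlip2.trans ?_
    have h1 : 0 ≤ g x ^ 2 * Real.sqrt (tnorm2 Z) :=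
      mul_nonneg hg2pos.le (Real.sqrt_nonneg _)
    nlinarith [le_max_left L 0]
  have hGbound : vnorm2 (fun γ => G x (X + Z) γ - G x X γ) ≤
      L' ^ 2 * (g x ^ 2) ^ 2 * tnorm2 Z := by
    have h0 := hvn N (fun γ => G x (X + Z) γ - G x X γ)
    have := Real.sq_sqrt h0
    have hRHS : (L' * g x ^ 2 * Real.sqrt (tnorm2 Z)) ^ 2 =
        L' ^ 2 * (g x ^ 2) ^ 2 * tnorm2 Z := by
      rw [mul_pow, mul_pow, Real.sq_sqrt (htn Z)]
    nlinarith [Real.sqrt_nonneg (vnorm2 (fun γ => G x (X + Z) γ - G x X γ))]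
  rw [hveq]
  have hinv : ((g x ^ 2)⁻¹) ^ 2 * (L' ^ 2 * (g x ^ 2) ^ 2 * tnorm2 Z) =
      L' ^ 2 * tnorm2 Z := by
    field_simp
  have step1 : ((g x ^ 2)⁻¹) ^ 2 * vnorm2 (fun γ => G x (X + Z) γ - G x X γ) ≤
      L' ^ 2 * tnorm2 Z := by
    rw [← hinv]
    exact mul_le_mul_of_nonneg_left hGbound (by positivity)
  have step2 : L' ^ 2 * tnorm2 Z ≤ be * ν ^ 2 * tnorm2 Z :=
    mul_le_mul_of_nonneg_right hbeν (htn Z)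
  have step3 : 0 ≤ (1 - be) / 2 * vnorm2 (contA A Z) :=
    mul_nonneg (by linarith) (hvn N _)
  linarith
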